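/- If the toppling function T : Z^d → N of the final sandpile configuration satisfies T(z) ≤ T(z') for every next-nearest-neighbor pair z, z' in the same parity class with d(z') ≤ d(z), and the support of T is path connected and invariant under coordinate permutations and sign changes, then the support of T is simply connected (contains no holes): there is no site y with T(y) > 0 having a neighbor x with T(x) = 0 that is strictly closer to the origin than y and than all neighbors of y with positive T. -/

import Mathlib

lemma exists_single (d : ℕ) (f : Fin d → ℤ) (h : ∑ i, |f i| = 1) :
    ∃ j, |f j| = 1 ∧ ∀ i, i ≠ j → f i = 0 := by
  have hnn : ∀ i ∈ Finset.univ, (0:ℤ) ≤ |f i| := fun i _ => abs_nonneg _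
  have hpos : ∃ j ∈ Finset.univ, (0:ℤ) < |f j| := by
    by_contra hc
    push_neg at hc
    have : ∑ i, |f i| = 0 := Finset.sum_eq_zero fun i hi => le_antisymm (hc i hi) (abs_nonneg _)
    omega
  obtain ⟨j, _, hj⟩ := hpos
  have hsplit : |f j| + ∑ i ∈ Finset.univ.erase j, |f i| = 1 := by
    rw [Finset.add_sum_erase Finset.univ (fun i => |f i|) (Finset.mem_univ j)]; exact h
  have hrest : ∀ i ∈ Finset.univ.erase j, (0:ℤ) ≤ |f i| := fun i _ => abs_nonneg _
  have hrestnn : (0:ℤ) ≤ ∑ i ∈ Finset.univ.erase j, |f i| := Finset.sum_nonneg hrest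
  have hj1 : |f j| = 1 := by omega
  have hzero : ∑ i ∈ Finset.univ.erase j, |f i| = 0 := by omega
  refine ⟨j, hj1, fun i hi => ?_⟩
  have := (Finset.sum_eq_zero_iff_of_nonneg hrest).mp hzero i (Finset.mem_erase.mpr ⟨hi, Finset.mem_univ i⟩)
  exact abs_eq_zero.mp this

lemma sum_sub_single {d : ℕ} (f g : Fin d → ℤ) (j : Fin d)
    (h : ∀ i, i ≠ j → f i = g i) : ∑ i, f i = (∑ i, g i) + (f j - g j) := by
  have h1 : ∑ i, (f i - g i) = f j - g j := by
    refine Finset.sum_eq_single_of_mem j (Finset.mem_univ j) fun i _ hi => ?_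
    rw [h i hi]; ring
  have := Finset.sum_sub_distrib (f := f) (g := g) (s := Finset.univ)
  omega

lemma sq_lt_natAbs (a b : ℤ) : a^2 < b^2 ↔ a.natAbs < b.natAbs := by
  rw [← sq_abs a, ← sq_abs b, Int.abs_eq_natAbs, Int.abs_eq_natAbs]
  constructor
  · intro h
    by_contra hc
    push_neg at hc
    exact absurd (pow_le_pow_left₀ (by positivity) (by exact_mod_cast hc) 2) (not_le.mpr h)
  · intro h
    have : ((a.natAbs:ℤ)) < b.natAbs := by exact_mod_cast h
    exact pow_lt_pow_left₀ this (by positivity) (by norm_num)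

/-- Nearest-neighbor adjacency on `ℤ^d`. -/
def LatticeAdj (d : ℕ) (x y : Fin d → ℤ) : Prop := ∑ i, |x i - y i| = 1

/-- If a toppling function `T : ℤ^d → ℕ` satisfies `T(z) ≤ T(z')` for every
next-nearest-neighbor pair `z, z'` in the same parity class with `d(z') ≤ d(z)`, and its
support is path connected and invariant under coordinate permutations and sign changes, then
its support has no holes: there is no site `y` with `T(y) > 0` having a neighbor `x` with
`T(x) = 0` that is strictly closer to the origin than `y` and than all neighbors of `y` with
positive `T`. -/
theorem support_no_holes (d : ℕ) (hd : 1 ≤ d) (T : (Fin d → ℤ) → ℕ)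
    (hmono : ∀ z z' : Fin d → ℤ,
      (∑ i, z i) % 2 = (∑ i, z' i) % 2 →
      (Finset.univ.filter fun i => z i ≠ z' i).card ≤ 2 →
      (∑ i, |(|z i| - |z' i|)|) = 2 →
      ∑ i, (z' i) ^ 2 ≤ ∑ i, (z i) ^ 2 →
      T z ≤ T z')
    (hconn : ∀ x y : Fin d → ℤ, 0 < T x → 0 < T y →
      Relation.ReflTransGen (fun a b => LatticeAdj d a b ∧ 0 < T a ∧ 0 < T b) x y)
    (hsymm : ∀ (σ : Equiv.Perm (Fin d)) (ε : Fin d → ℤ), (∀ i, ε i = 1 ∨ ε i = -1) →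
      ∀ x : Fin d → ℤ, T (fun i => ε i * x (σ i)) = T x) :
    ¬ ∃ y x : Fin d → ℤ, 0 < T y ∧ T x = 0 ∧ LatticeAdj d x y ∧
        (∑ i, (x i) ^ 2 < ∑ i, (y i) ^ 2) ∧
        (∀ x' : Fin d → ℤ, LatticeAdj d x' y → 0 < T x' →
          ∑ i, (x i) ^ 2 < ∑ i, (x' i) ^ 2) := by
  rintro ⟨y, x, hy, hx0, hxy, hlt, hmin⟩
  have hxy' : ∑ i, |x i - y i| = 1 := hxy
  obtain ⟨k, hk1, hk0⟩ := exists_single d (fun i => x i - y i) hxy'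
  have hxk : ∀ i, i ≠ k → x i = y i := fun i hi => by
    have : x i - y i = 0 := hk0 i hi; omega
  have hsx : ∑ i, (x i)^2 = (∑ i, (y i)^2) + ((x k)^2 - (y k)^2) :=
    sum_sub_single _ _ k (fun i hi => by rw [hxk i hi])
  have hxklt : (x k)^2 < (y k)^2 := by omega
  have hk1' : ((x k - y k).natAbs : ℤ) = 1 := by
    rw [← Int.abs_eq_natAbs]; exact hk1
  have hxkab : (x k).natAbs + 1 = (y k).natAbs := by
    have h2 := (sq_lt_natAbs _ _).mp hxklt
    omega
  -- every neighbor of y has T = 0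
  have key : ∀ z : Fin d → ℤ, (∑ i, |z i - y i|) = 1 → T z = 0 := by
    intro z hz
    by_contra hTz
    have hTzpos : 0 < T z := Nat.pos_of_ne_zero hTz
    have hfar : ∑ i, (x i)^2 < ∑ i, (z i)^2 := hmin z hz hTzpos
    obtain ⟨j, hj1, hj0⟩ := exists_single d (fun i => z i - y i) hz
    have hzj : ∀ i, i ≠ j → z i = y i := fun i hi => by
      have : z i - y i = 0 := hj0 i hi; omega
    have hj1' : ((z j - y j).natAbs : ℤ) = 1 := by
      rw [← Int.abs_eq_natAbs]; exact hj1
    have hzx : ∀ i, i ≠ j → i ≠ k → z i = x i := fun i hij hik => by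
      rw [hzj i hij, hxk i hik]
    have hsz : ∑ i, z i = (∑ i, y i) + (z j - y j) := sum_sub_single _ _ j hzj
    have hsx' : ∑ i, x i = (∑ i, y i) + (x k - y k) := sum_sub_single _ _ k hxk
    have hpar : (∑ i, z i) % 2 = (∑ i, x i) % 2 := by omega
    have hcard : (Finset.univ.filter fun i => z i ≠ x i).card ≤ 2 := by
      have hsub : (Finset.univ.filter fun i => z i ≠ x i) ⊆ {j, k} := by
        intro i hi
        simp only [Finset.mem_filter] at hi
        by_contra hc
        simp only [Finset.mem_insert, Finset.mem_singleton] at hc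
        push_neg at hc
        exact hi.2 (hzx i hc.1 hc.2)
      calc (Finset.univ.filter fun i => z i ≠ x i).card
          ≤ ({j, k} : Finset (Fin d)).card := Finset.card_le_card hsub
        _ ≤ 2 := by
            have := Finset.card_insert_le j ({k} : Finset (Fin d))
            simpa using this
    have habs : ∑ i, |(|z i| - |x i|)| = 2 := by
      by_cases hjk : j = k
      · subst hjk
        have hzxk : z j ≠ x j := by
          intro he
          apply hTz
          have hzeq : z = x := funext fun i => by
            by_cases hij : i = j
            · rw [hij, he]
            · exact hzx i hij hij
          rw [hzeq, hx0]
        have hred : ∑ i, |(|z i| - |x i|)| = |(|z j| - |x j|)| := by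
          refine Finset.sum_eq_single_of_mem j (Finset.mem_univ j) fun i _ hi => ?_
          rw [hzx i hi hi]; simp
        rw [hred]
        simp only [Int.abs_eq_natAbs]
        omega
      · have hjk' : j ≠ k := hjk
        have hsum2 : ∑ i, |(|z i| - |x i|)| = ∑ i ∈ ({j, k} : Finset (Fin d)), |(|z i| - |x i|)| := by
          symm
          refine Finset.sum_subset (Finset.subset_univ _) fun i _ hi => ?_
          simp only [Finset.mem_insert, Finset.mem_singleton] at hi
          push_neg at hi
          rw [hzx i hi.1 hi.2]; simp
        rw [hsum2, Finset.sum_pair hjk']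
        have h1 : |(|z j| - |x j|)| = 1 := by
          rw [hxk j hjk']
          simp only [Int.abs_eq_natAbs]
          omega
        have h2 : |(|z k| - |x k|)| = 1 := by
          rw [hzj k (Ne.symm hjk')]
          simp only [Int.abs_eq_natAbs]
          omega
        omega
    have := hmono z x hpar hcard habs (le_of_lt hfar)
    omega
  -- conclude
  have hyk : y k ≠ 0 := fun h => by
    rw [h] at hxkab; simp at hxkab
  set ε : Fin d → ℤ := fun i => if i = k then -1 else 1 with hε
  have hy'eq : T (fun i => ε i * y i) = T y := by
    have := hsymm (Equiv.refl (Fin d)) ε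
      (fun i => by by_cases h : i = k <;> simp [hε, h]) y
    simpa using this
  have hTy' : 0 < T (fun i => ε i * y i) := by rw [hy'eq]; exact hy
  have hpath := hconn y (fun i => ε i * y i) hy hTy'
  rcases hpath.cases_head with heq | ⟨b, ⟨hadj, _, hTb⟩, _⟩
  · have hk' : y k = ε k * y k := congrFun heq k
    simp [hε] at hk'
    exact hyk (by omega)
  · have hadj' : ∑ i, |b i - y i| = 1 := by
      rw [Finset.sum_congr rfl (fun i _ => abs_sub_comm (b i) (y i))]
      exact hadj
    have := key b hadj'
    omega
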